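/- The reduced pointed Σ-labelled rooted trees other than the trivial tree are closed under pointed tree concatenation ∘ and the domain operation D, and form the free algebra over Σ for the class of {∘, D}-algebras of binary relations: for every set X, every set A of binary relations on X closed under relation composition and the domain operation, and every map g from Σ to A, there is a unique map h from the nontrivial reduced pointed Σ-labelled rooted trees to A such that h(→a) = g(a) for all a ∈ Σ, h(T∘S) = h(T) composed with h(S), and h(D(T)) = domain of h(T). -/

import Mathlib

inductive PreTree (α : Type) : Type
  | node : Bool → List (α × PreTree α) → PreTree α

namespace PreTree

variable {α : Type}

def mark : PreTree α → Bool
  | node b _ => b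

def children : PreTree α → List (α × PreTree α)
  | node _ cs => cs

def le : PreTree α → PreTree α → Prop
  | node b₁ c₁, node b₂ c₂ =>
      (b₂ = true → b₁ = true) ∧
      ∀ q, q ∈ c₂ → ∃ p, p ∈ c₁ ∧ p.1 = q.1 ∧ le p.2 q.2
termination_by _ t₂ => sizeOf t₂
decreasing_by
  have h := List.sizeOf_lt_of_mem ‹q ∈ c₂›
  obtain ⟨qa, qt⟩ := q
  simp at h ⊢
  omega

-- The reduced form of a tree: reduce all child subtrees, then for each
-- label keep only the `≤`-minimal attached subtrees.
open scoped Classical in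
noncomputable def reduce : PreTree α → PreTree α
  | node b cs =>
      let cs' : List (α × PreTree α) := cs.attach.map fun p => (p.1.1, reduce p.1.2)
      node b (cs'.filter fun q =>
        decide (∀ q' ∈ cs', q'.1 = q.1 → le q'.2 q.2 → le q.2 q'.2))
termination_by t => sizeOf t
decreasing_by
  have h := List.sizeOf_lt_of_mem p.2
  obtain ⟨⟨pa, pt⟩, hp⟩ := p
  simp at h ⊢
  omega

/-- A tree is reduced if it equals its reduced form. -/
def Reduced (T : PreTree α) : Prop := reduce T = T

/-- The number of marked (point) vertices of a tree. -/
def markCount : PreTree α → ℕ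
  | node b cs => (cond b 1 0) + (cs.attach.map fun p => markCount p.1.2).sum
termination_by t => sizeOf t
decreasing_by
  have h := List.sizeOf_lt_of_mem p.2
  obtain ⟨⟨pa, pt⟩, hp⟩ := p
  simp at h ⊢
  omega

/-- A pointed tree: exactly one vertex is marked as the point. -/
def Pointed (T : PreTree α) : Prop := markCount T = 1

/-- Remove all point marks. -/
def unmark : PreTree α → PreTree α
  | node _ cs => node false (cs.attach.map fun p => (p.1.1, unmark p.1.2))
termination_by t => sizeOf t
decreasing_by
  have h := List.sizeOf_lt_of_mem p.2
  obtain ⟨⟨pa, pt⟩, hp⟩ := p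
  simp at h ⊢
  omega

/-- Graft the tree `S` onto the point of `T` (identifying the point of `T`
with the root of `S`); the marks of `S` determine the new point. -/
def graft (S : PreTree α) : PreTree α → PreTree α
  | node b cs =>
      if b then node S.mark (cs ++ S.children)
      else node b (cs.attach.map fun p => (p.1.1, graft S p.1.2))
termination_by t => sizeOf t
decreasing_by
  have h := List.sizeOf_lt_of_mem p.2
  obtain ⟨⟨pa, pt⟩, hp⟩ := p
  simp at h ⊢
  omega

/-- Move the point of `T` to its root. -/
def pointAtRoot (T : PreTree α) : PreTree α := node true (unmark T).children

/-- Pointed tree concatenation `T ∘ S`. -/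
noncomputable def concat (T S : PreTree α) : PreTree α := reduce (graft S T)

/-- The domain operation `D(T)` on pointed trees. -/
noncomputable def domTree (T : PreTree α) : PreTree α := reduce (pointAtRoot T)

/-- The trivial pointed tree: one vertex, both root and point. -/
def trivialTree : PreTree α := node true []

/-- The two-vertex pointed tree with a single `a`-labelled edge, point at the child. -/
def arrow (a : α) : PreTree α := node false [(a, node true [])]


/-- Set-theoretic equality of trees (children lists regarded as sets). -/
def eqv : PreTree α → PreTree α → Prop
  | node b₁ c₁, node b₂ c₂ =>
      b₁ = b₂ ∧
      (∀ p, p ∈ c₁ → ∃ q, q ∈ c₂ ∧ p.1 = q.1 ∧ eqv p.2 q.2) ∧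
      (∀ q, q ∈ c₂ → ∃ p : {x // x ∈ c₁}, p.1.1 = q.1 ∧ eqv p.1.2 q.2)
termination_by t₁ _ => sizeOf t₁
decreasing_by
  · have h₁ := List.sizeOf_lt_of_mem ‹p ∈ c₁›
    obtain ⟨pa, pt⟩ := p
    simp at h₁ ⊢
    omega
  · have h₁ := List.sizeOf_lt_of_mem p.2
    obtain ⟨⟨pa, pt⟩, hp⟩ := p
    simp at h₁ ⊢
    omega


/-- The subtree of `T` at position `p` (a list of child indices), if it exists. -/
def subAt : List ℕ → PreTree α → Option (PreTree α)
  | [], t => some t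
  | i :: is, node _ cs => (cs[i]?).bind fun p => subAt is p.2

/-- `p` is a vertex of `T`. -/
def IsVertex (T : PreTree α) (p : List ℕ) : Prop := ∃ t, subAt p T = some t

/-- The vertex `p` of `T` is the point (is marked). -/
def IsPoint (T : PreTree α) (p : List ℕ) : Prop :=
  ∃ t, subAt p T = some t ∧ t.mark = true

/-- There is an `a`-labelled edge of `T` from vertex `p` (the parent) to
vertex `q` (the child). -/
def Edge (T : PreTree α) (a : α) (p q : List ℕ) : Prop :=
  ∃ c, subAt p T = some c ∧ ∃ i t, c.children[i]? = some (a, t) ∧ q = p ++ [i]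

theorem root_isVertex (T : PreTree α) : IsVertex T [] := ⟨T, rfl⟩

/-- A homomorphism of pointed labelled rooted trees from `S` to `T`:
a map of vertices preserving the labelled edge relations, sending the root
to the root and points to points. -/
def HomTree (S T : PreTree α) : Prop :=
  ∃ θ : List ℕ → List ℕ,
    θ [] = [] ∧
    (∀ p, IsVertex S p → IsVertex T (θ p)) ∧
    (∀ a p q, Edge S a p q → Edge T a (θ p) (θ q)) ∧
    (∀ p, IsPoint S p → IsPoint T (θ p))

/-- A homomorphism of the pointed tree `T`, viewed as a relational structure,
into the relational structure `(X, f)`, mapping the root of `T` to `x` and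
the point of `T` to `y`. -/
def HomInto {X : Type} (T : PreTree α) (f : α → X → X → Prop) (x y : X) : Prop :=
  ∃ θ : List ℕ → X,
    θ [] = x ∧
    (∀ a p q, Edge T a p q → f a (θ p) (θ q)) ∧
    (∀ p, IsPoint T p → θ p = y)


end PreTree

namespace FreeKAD

/-- Terms of the signature `{∘, 1, D}`. -/
inductive Term1 (α : Type) : Type
  | var : α → Term1 α
  | one : Term1 α
  | comp : Term1 α → Term1 α → Term1 α
  | dom : Term1 α → Term1 α

/-- Terms of the signature `{∘, +, *, 0, 1, D}` (Kleene algebra with domain). -/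
inductive TermK (α : Type) : Type
  | var : α → TermK α
  | zero : TermK α
  | one : TermK α
  | comp : TermK α → TermK α → TermK α
  | add : TermK α → TermK α → TermK α
  | star : TermK α → TermK α
  | dom : TermK α → TermK α

variable {α : Type}

/-- The relational interpretation of a `{∘, 1, D}`-term over a set `X`,
under an assignment `f` of binary relations on `X` to the variables. -/
def rinterp1 {X : Type} (f : α → X → X → Prop) : Term1 α → X → X → Prop
  | .var a => f a
  | .one => fun x y => x = y
  | .comp s t => fun x y => ∃ z, rinterp1 f s x z ∧ rinterp1 f t z y
  | .dom s => fun x y => x = y ∧ ∃ z, rinterp1 f s x z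

/-- The relational interpretation of a `{∘, +, *, 0, 1, D}`-term over a set `X`,
under an assignment `f` of binary relations on `X` to the variables. -/
def rinterpK {X : Type} (f : α → X → X → Prop) : TermK α → X → X → Prop
  | .var a => f a
  | .zero => fun _ _ => False
  | .one => fun x y => x = y
  | .comp s t => fun x y => ∃ z, rinterpK f s x z ∧ rinterpK f t z y
  | .add s t => fun x y => rinterpK f s x y ∨ rinterpK f t x y
  | .star s => Relation.ReflTransGen (rinterpK f s)
  | .dom s => fun x y => x = y ∧ ∃ z, rinterpK f s x z

/-- Composition of binary relations. -/
def relComp {X : Type} (R S : X → X → Prop) : X → X → Prop :=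
  fun x y => ∃ z, R x z ∧ S z y

/-- Union of binary relations. -/
def relUnion {X : Type} (R S : X → X → Prop) : X → X → Prop :=
  fun x y => R x y ∨ S x y

/-- The domain operation on binary relations. -/
def relDom {X : Type} (R : X → X → Prop) : X → X → Prop :=
  fun x y => x = y ∧ ∃ z, R x z

/-- The identity relation. -/
def relId {X : Type} : X → X → Prop := fun x y => x = y

/-- The empty relation. -/
def relEmpty {X : Type} : X → X → Prop := fun _ _ => False

end FreeKAD

namespace FreeKAD

open PreTree

variable {α : Type}

/-- The single-tree interpretation of `{∘, 1, D}`-terms. -/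
noncomputable def interp1 : Term1 α → PreTree α
  | .var a => arrow a
  | .one => trivialTree
  | .comp s t => concat (interp1 s) (interp1 t)
  | .dom s => domTree (interp1 s)

/-- The set of `≤`-maximal elements of a set of trees. -/
def maximalSet (K : Set (PreTree α)) : Set (PreTree α) :=
  {T | T ∈ K ∧ ∀ S ∈ K, le T S → le S T}

/-- Elementwise lifting of pointed tree concatenation to sets of trees. -/
def liftComp (K L : Set (PreTree α)) : Set (PreTree α) :=
  {U | ∃ T ∈ K, ∃ S ∈ L, U = concat T S}

/-- Elementwise lifting of the domain operation to sets of trees. -/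
def liftDom (K : Set (PreTree α)) : Set (PreTree α) :=
  {U | ∃ T ∈ K, U = domTree T}

/-- Iterated lifted concatenation: `K^0 = {trivial}`, `K^(i+1) = K^i ∘ K`. -/
def powC (K : Set (PreTree α)) : ℕ → Set (PreTree α)
  | 0 => {trivialTree}
  | i + 1 => liftComp (powC K i) K

/-- The standard tree interpretation of `{∘, +, *, 0, 1, D}`-terms. -/
def sinterp : TermK α → Set (PreTree α)
  | .var a => {arrow a}
  | .zero => ∅
  | .one => {trivialTree}
  | .comp s t => maximalSet (liftComp (sinterp s) (sinterp t))
  | .add s t => maximalSet (sinterp s ∪ sinterp t)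
  | .star s => maximalSet (⋃ i : ℕ, powC (sinterp s) (i + 1))
  | .dom s => maximalSet (liftDom (sinterp s))

/-- Equality of sets of trees, with trees compared as (hereditarily finite) sets. -/
def SetEqv (K L : Set (PreTree α)) : Prop :=
  (∀ T ∈ K, ∃ S ∈ L, eqv T S) ∧ (∀ S ∈ L, ∃ T ∈ K, eqv T S)

/-- A set of reduced pointed trees is regular if it is the standard tree
interpretation of some `{∘, +, *, 0, 1, D}`-term. -/
def Regular (L : Set (PreTree α)) : Prop := ∃ t : TermK α, L = sinterp t

/-- The set of reduced trees lying `≤`-below some member of `L`. -/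
def down (L : Set (PreTree α)) : Set (PreTree α) :=
  {T | Reduced T ∧ ∃ S ∈ L, le T S}

end FreeKAD

namespace FreeKAD
open PreTree

/-- Nontrivial reduced pointed `Σ`-labelled rooted trees. -/
def NRPTree (α : Type) : Type :=
  {T : PreTree α // T.Reduced ∧ T.Pointed ∧ ¬ eqv T trivialTree}

end FreeKAD

section Aux
variable {α : Type}

theorem sizeOf_child_lt {b : Bool} {cs : List (α × PreTree α)} {p : α × PreTree α}
    (h : p ∈ cs) : sizeOf p.2 < sizeOf (PreTree.node b cs) := by
  have h := List.sizeOf_lt_of_mem h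
  obtain ⟨a, t⟩ := p
  simp at h ⊢
  omega

theorem ptree_strongInduction {P : PreTree α → Prop}
    (ih : ∀ T, (∀ S : PreTree α, sizeOf S < sizeOf T → P S) → P T) : ∀ T, P T := by
  have H : ∀ n (T : PreTree α), sizeOf T < n → P T := by
    intro n
    induction n with
    | zero => intro T h; omega
    | succ n ihn => intro T hT; exact ih T (fun S hS => ihn S (by omega))
  exact fun T => H (sizeOf T + 1) T (by omega)

theorem attach_map₂ (cs : List (α × PreTree α)) (f : α × PreTree α → PreTree α) :
    (cs.attach.map fun p => (p.1.1, f p.1)) = cs.map fun p => (p.1, f p) :=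
  List.attach_map_val (l := cs) (f := fun p => (p.1, f p))

theorem markCount_node (b : Bool) (cs : List (α × PreTree α)) :
    PreTree.markCount (.node b cs) = cond b 1 0 + (cs.map fun p => PreTree.markCount p.2).sum := by
  rw [PreTree.markCount]
  exact congrArg (cond b 1 0 + ·) (congrArg List.sum (List.attach_map_val (l := cs) (f := fun p => p.2.markCount)))

theorem unmark_node (b : Bool) (cs : List (α × PreTree α)) :
    PreTree.unmark (.node b cs) = .node false (cs.map fun p => (p.1, PreTree.unmark p.2)) := by
  rw [PreTree.unmark]
  exact congrArg _ (List.attach_map_val (l := cs) (f := fun p => (p.1, PreTree.unmark p.2)))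

theorem graft_node_true (S : PreTree α) (cs : List (α × PreTree α)) :
    PreTree.graft S (.node true cs) = .node S.mark (cs ++ S.children) := by
  rw [PreTree.graft]; simp

theorem graft_node_false (S : PreTree α) (cs : List (α × PreTree α)) :
    PreTree.graft S (.node false cs) = .node false (cs.map fun p => (p.1, PreTree.graft S p.2)) := by
  rw [PreTree.graft]
  simp only [if_neg Bool.false_ne_true]
  exact congrArg _ (List.attach_map_val (l := cs) (f := fun p => (p.1, PreTree.graft S p.2)))

theorem le_node_iff (b₁ b₂ : Bool) (c₁ c₂ : List (α × PreTree α)) :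
    PreTree.le (.node b₁ c₁) (.node b₂ c₂) ↔
      ((b₂ = true → b₁ = true) ∧
       ∀ q ∈ c₂, ∃ p, p ∈ c₁ ∧ p.1 = q.1 ∧ PreTree.le p.2 q.2) := by
  rw [PreTree.le]

theorem ple_refl : ∀ T : PreTree α, T.le T := by
  apply ptree_strongInduction
  intro T ih
  obtain ⟨b, cs⟩ := T
  rw [le_node_iff]
  exact ⟨fun h => h, fun q hq => ⟨q, hq, rfl, ih q.2 (sizeOf_child_lt hq)⟩⟩

theorem ple_trans : ∀ T₁ T₂ T₃ : PreTree α, T₁.le T₂ → T₂.le T₃ → T₁.le T₃ := by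
  have : ∀ n, ∀ T₁ T₂ T₃ : PreTree α, sizeOf T₃ < n → T₁.le T₂ → T₂.le T₃ → T₁.le T₃ := by
    intro n
    induction n with
    | zero => intro _ _ _ h; omega
    | succ n ihn =>
      rintro ⟨b₁, c₁⟩ ⟨b₂, c₂⟩ ⟨b₃, c₃⟩ hsz h12 h23
      rw [le_node_iff] at h12 h23 ⊢
      refine ⟨fun h => h12.1 (h23.1 h), fun q hq => ?_⟩
      obtain ⟨p, hp, hpl, hple⟩ := h23.2 q hq
      obtain ⟨r, hr, hrl, hrle⟩ := h12.2 p hp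
      exact ⟨r, hr, hrl.trans hpl, ihn r.2 p.2 q.2 (by have := sizeOf_child_lt (b := b₃) hq; omega) hrle hple⟩
  exact fun T₁ T₂ T₃ => this (sizeOf T₃ + 1) T₁ T₂ T₃ (by omega)

end Aux
section Aux2
open PreTree
variable {α : Type}

theorem mark_of_markCount_zero {T : PreTree α} (h : T.markCount = 0) : T.mark = false := by
  obtain ⟨b, cs⟩ := T
  rw [markCount_node] at h
  cases b with
  | false => rfl
  | true => simp at h

theorem child_markCount_zero {b : Bool} {cs : List (α × PreTree α)}
    (h : markCount (.node b cs) = 0) : ∀ p ∈ cs, markCount p.2 = 0 := by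
  rw [markCount_node] at h
  intro p hp
  have h2 : (cs.map fun p => markCount p.2).sum = 0 := by omega
  rw [List.sum_eq_zero_iff] at h2
  exact h2 _ (List.mem_map_of_mem hp)

theorem child_markCount_zero_of_true {cs : List (α × PreTree α)}
    (h : markCount (.node true cs) = 1) : ∀ p ∈ cs, markCount p.2 = 0 := by
  intro p hp
  rw [markCount_node] at h
  have h2 : (cs.map fun p => markCount p.2).sum = 0 := by simpa using h
  rw [List.sum_eq_zero_iff] at h2
  exact h2 _ (List.mem_map_of_mem hp)

theorem map_eq_self_of {cs : List (α × PreTree α)} {f : PreTree α → PreTree α}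
    (h : ∀ p ∈ cs, f p.2 = p.2) : (cs.map fun p => (p.1, f p.2)) = cs := by
  conv_rhs => rw [← List.map_id cs]
  apply List.map_congr_left
  intro p hp
  rw [h p hp]
  rfl

theorem unmark_eq_self : ∀ T : PreTree α, T.markCount = 0 → T.unmark = T := by
  apply ptree_strongInduction
  rintro ⟨b, cs⟩ ih h
  rw [unmark_node]
  have hb := mark_of_markCount_zero h
  simp only [mark] at hb; subst hb
  congr 1
  exact map_eq_self_of fun p hp => ih p.2 (sizeOf_child_lt hp) (child_markCount_zero h p hp)

theorem graft_eq_self (S : PreTree α) : ∀ T : PreTree α, T.markCount = 0 → graft S T = T := by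
  apply ptree_strongInduction
  rintro ⟨b, cs⟩ ih h
  have hb := mark_of_markCount_zero h
  simp only [mark] at hb; subst hb
  rw [graft_node_false]
  congr 1
  exact map_eq_self_of fun p hp => ih p.2 (sizeOf_child_lt hp) (child_markCount_zero h p hp)

theorem markCount_unmark : ∀ T : PreTree α, T.unmark.markCount = 0 := by
  apply ptree_strongInduction
  rintro ⟨b, cs⟩ ih
  rw [unmark_node, markCount_node]
  simp only [cond_false, List.map_map, Nat.zero_add]
  rw [List.sum_eq_zero_iff]
  intro x hx
  simp only [List.mem_map, Function.comp] at hx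
  obtain ⟨p, hp, rfl⟩ := hx
  exact ih p.2 (sizeOf_child_lt hp)

theorem markCount_graft {S : PreTree α} : ∀ T : PreTree α,
    T.markCount = 1 → (graft S T).markCount = S.markCount := by
  apply ptree_strongInduction
  rintro ⟨b, cs⟩ ih h
  cases b with
  | true =>
    rw [graft_node_true]
    obtain ⟨bs, css⟩ := S
    rw [markCount_node, List.map_append]
    rw [List.sum_append, markCount_node]
    have h0 : ∀ p ∈ cs, markCount p.2 = 0 := child_markCount_zero_of_true h
    have : (cs.map fun p => markCount p.2).sum = 0 := by
      rw [List.sum_eq_zero_iff]; intro x hx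
      obtain ⟨p, hp, rfl⟩ := List.mem_map.mp hx
      exact h0 p hp
    simp only [mark, children, this]
    omega
  | false =>
    rw [graft_node_false, markCount_node]
    rw [markCount_node] at h
    simp only [cond_false, Nat.zero_add, List.map_map, Function.comp_def] at h ⊢
    have hch : ∀ p ∈ cs, (markCount p.2 = 0 → markCount (graft S p.2) = 0) ∧
        (markCount p.2 = 1 → markCount (graft S p.2) = markCount S) := fun p hp =>
      ⟨fun h0 => by rw [graft_eq_self S p.2 h0]; exact h0,
       fun h1 => ih p.2 (sizeOf_child_lt hp) h1⟩
    clear ih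
    induction cs with
    | nil => simp at h
    | cons p cs' ihl =>
      simp only [List.map_cons, List.sum_cons] at h ⊢
      rcases Nat.eq_zero_or_pos (markCount p.2) with h0 | hpos
      · rw [(hch p (by simp)).1 h0]
        rw [h0] at h
        simp only [Nat.zero_add] at h ⊢
        exact ihl h (fun q hq => hch q (by simp [hq]))
      · have h1 : markCount p.2 = 1 := by omega
        rw [(hch p (by simp)).2 h1]
        have hrest : (cs'.map fun q => markCount q.2).sum = 0 := by rw [h1] at h; omega
        have hz : (cs'.map fun q => markCount (graft S q.2)).sum = 0 := by
          rw [List.sum_eq_zero_iff]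
          intro x hx
          obtain ⟨q, hq, rfl⟩ := List.mem_map.mp hx
          have hq0 := List.sum_eq_zero_iff.mp hrest _ (List.mem_map_of_mem hq)
          exact (hch q (by simp [hq])).1 hq0
        omega

end Aux2
section Aux3
open PreTree
variable {α : Type} {X : Type}

theorem subAt_nil (T : PreTree α) : subAt [] T = some T := rfl

theorem subAt_cons (i : ℕ) (is : List ℕ) (b : Bool) (cs : List (α × PreTree α)) :
    subAt (i :: is) (.node b cs) = (cs[i]?).bind fun p => subAt is p.2 := rfl

theorem mark_node (b : Bool) (cs : List (α × PreTree α)) : (PreTree.node b cs).mark = b := rfl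

theorem markCount_pointAtRoot (T : PreTree α) : (pointAtRoot T).markCount = 1 := by
  obtain ⟨b, cs⟩ := T
  rw [pointAtRoot, unmark_node, markCount_node]
  simp only [children, cond_true, List.map_map, Function.comp_def]
  have : (List.map (fun p => (unmark p.2).markCount) cs).sum = 0 := by
    rw [List.sum_eq_zero_iff]
    intro x hx
    obtain ⟨q, hq, rfl⟩ := List.mem_map.mp hx
    exact markCount_unmark q.2
  omega

theorem isPoint_markCount_pos : ∀ (p : List ℕ) (T : PreTree α), IsPoint T p → 0 < T.markCount := by
  intro p
  induction p with
  | nil =>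
    rintro ⟨b, cs⟩ ⟨t, ht, hm⟩
    rw [subAt_nil, Option.some_inj] at ht
    subst ht
    rw [mark_node] at hm
    subst hm
    rw [markCount_node]
    simp
  | cons i is ih =>
    rintro ⟨b, cs⟩ ⟨t, ht, hm⟩
    rw [subAt_cons] at ht
    cases hg : cs[i]? with
    | none => rw [hg] at ht; simp at ht
    | some q =>
      rw [hg] at ht
      simp only [Option.bind_some] at ht
      have hpos := ih q.2 ⟨t, ht, hm⟩
      have hqmem : q ∈ cs := List.mem_of_getElem? hg
      rw [markCount_node]
      have hmm : markCount q.2 ∈ cs.map fun p => markCount p.2 := List.mem_map_of_mem hqmem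
      rcases Nat.eq_zero_or_pos ((cs.map fun p => markCount p.2).sum) with h0 | h1
      · rw [List.sum_eq_zero_iff] at h0
        have := h0 _ hmm
        omega
      · omega

theorem not_isPoint_of_markCount_zero {T : PreTree α} (h : T.markCount = 0)
    (p : List ℕ) : ¬ IsPoint T p := fun hp => by
  have := isPoint_markCount_pos p T hp
  omega

theorem homInto_target_irrel {T : PreTree α} (h : T.markCount = 0) {g : α → X → X → Prop}
    {z y y' : X} (hh : HomInto T g z y) : HomInto T g z y' := by
  obtain ⟨θ, h1, h2, h3⟩ := hh
  exact ⟨θ, h1, h2, fun p hp => absurd hp (not_isPoint_of_markCount_zero h p)⟩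

/-- The key recursive characterization of `HomInto` at a node. -/
theorem homInto_node (g : α → X → X → Prop) (b : Bool) (cs : List (α × PreTree α)) (x y : X) :
    HomInto (.node b cs) g x y ↔
      ((b = true → x = y) ∧ ∀ p ∈ cs, ∃ z, g p.1 x z ∧ HomInto p.2 g z y) := by
  constructor
  · rintro ⟨θ, hroot, hedge, hpoint⟩
    constructor
    · intro hb
      have := hpoint [] ⟨.node b cs, rfl, hb⟩
      rw [hroot] at this
      exact this
    · intro p hp
      obtain ⟨i, hi, hieq⟩ := List.mem_iff_getElem.mp hp
      have hget : cs[i]? = some p := by rw [List.getElem?_eq_getElem hi, hieq]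
      refine ⟨θ [i], ?_, ?_⟩
      · have he : Edge (.node b cs) p.1 [] [i] := by
          refine ⟨.node b cs, rfl, i, p.2, ?_, rfl⟩
          simp only [children]
          rw [hget]
        have := hedge p.1 [] [i] he
        rwa [hroot] at this
      · refine ⟨fun q => θ (i :: q), rfl, ?_, ?_⟩
        · rintro a p' q' ⟨c, hc, i', t, hct, hq'⟩
          subst hq'
          have he : Edge (.node b cs) a (i :: p') (i :: (p' ++ [i'])) := by
            refine ⟨c, ?_, i', t, hct, rfl⟩
            rw [subAt_cons, hget]
            simpa using hc
          exact hedge a _ _ he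
        · rintro p' ⟨t, ht, hm⟩
          refine hpoint (i :: p') ⟨t, ?_, hm⟩
          rw [subAt_cons, hget]
          simpa using ht
  · rintro ⟨hb, hch⟩
    classical
    let F : (α × PreTree α) → (List ℕ → X) := fun p =>
      if h : ∃ z, g p.1 x z ∧ HomInto p.2 g z y then
        Classical.choose (Classical.choose_spec h).2
      else fun _ => x
    have hF : ∀ p ∈ cs,
        g p.1 x (F p []) ∧
        (∀ a p' q', Edge p.2 a p' q' → g a (F p p') (F p q')) ∧
        (∀ p', IsPoint p.2 p' → F p p' = y) := by
      intro p hp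
      have h := hch p hp
      have hspec := Classical.choose_spec (Classical.choose_spec h).2
      refine ⟨?_, ?_, ?_⟩ <;> simp only [F, dif_pos h]
      · rw [hspec.1]; exact (Classical.choose_spec h).1
      · exact hspec.2.1
      · exact hspec.2.2
    let θ : List ℕ → X := fun l => l.rec x (fun i q _ => (cs[i]?).elim x (fun p => F p q))
    have hθ0 : θ [] = x := rfl
    have hθ1 : ∀ i q, θ (i :: q) = (cs[i]?).elim x (fun p => F p q) := fun _ _ => rfl
    refine ⟨θ, rfl, ?_, ?_⟩
    · rintro a p q ⟨c, hc, i', t, hct, hq⟩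
      subst hq
      cases p with
      | nil =>
        rw [subAt_nil, Option.some_inj] at hc
        subst hc
        simp only [children] at hct
        have hmem : (a, t) ∈ cs := List.mem_of_getElem? hct
        have := (hF (a, t) hmem).1
        rw [hθ0, List.nil_append, hθ1, hct]
        exact this
      | cons i p' =>
        rw [subAt_cons] at hc
        cases hg : cs[i]? with
        | none => rw [hg] at hc; simp at hc
        | some p₀ =>
          rw [hg] at hc
          simp only [Option.bind_some] at hc
          have hmem : p₀ ∈ cs := List.mem_of_getElem? hg
          have he : Edge p₀.2 a p' (p' ++ [i']) := ⟨c, hc, i', t, hct, rfl⟩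
          have := (hF p₀ hmem).2.1 a p' (p' ++ [i']) he
          rw [List.cons_append, hθ1, hθ1, hg]
          exact this
    · rintro p ⟨t, ht, hm⟩
      cases p with
      | nil =>
        rw [subAt_nil, Option.some_inj] at ht
        subst ht
        exact hb hm
      | cons i p' =>
        rw [subAt_cons] at ht
        cases hg : cs[i]? with
        | none => rw [hg] at ht; simp at ht
        | some p₀ =>
          rw [hg] at ht
          simp only [Option.bind_some] at ht
          have hmem : p₀ ∈ cs := List.mem_of_getElem? hg
          have := (hF p₀ hmem).2.2 p' ⟨t, ht, hm⟩
          rw [hθ1, hg]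
          exact this

end Aux3
section Aux4
open PreTree
variable {α : Type} {X : Type}

theorem homInto_trivial (g : α → X → X → Prop) (x y : X) :
    HomInto (trivialTree : PreTree α) g x y ↔ x = y := by
  rw [trivialTree, homInto_node]
  simp

theorem homInto_arrow (g : α → X → X → Prop) (a : α) (x y : X) :
    HomInto (arrow a) g x y ↔ g a x y := by
  rw [arrow, homInto_node]
  constructor
  · rintro ⟨-, h⟩
    obtain ⟨z, hz, hh⟩ := h (a, .node true []) (by simp)
    rw [show PreTree.node true [] = (trivialTree : PreTree α) from rfl, homInto_trivial] at hh
    rwa [hh] at hz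
  · intro h
    refine ⟨by simp, ?_⟩
    rintro p hp
    simp only [List.mem_singleton] at hp
    subst hp
    exact ⟨y, h, (homInto_trivial g y y).mpr rfl⟩

def IsBacksim (R : PreTree α → PreTree α → Prop) : Prop :=
  ∀ S T, R S T → ((T.mark = true → S.mark = true) ∧
    ∀ q ∈ T.children, ∃ p ∈ S.children, p.1 = q.1 ∧ R p.2 q.2)

theorem backsim_homInto {R : PreTree α → PreTree α → Prop} (hR : IsBacksim R)
    {g : α → X → X → Prop} {y : X} :
    ∀ (T S : PreTree α) (x : X), R S T → HomInto S g x y → HomInto T g x y := by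
  have key : ∀ (T : PreTree α), ∀ S x, R S T → HomInto S g x y → HomInto T g x y := by
    apply ptree_strongInduction
      (P := fun T => ∀ S x, R S T → HomInto S g x y → HomInto T g x y)
    rintro ⟨b, cs⟩ ih S x hRS hS
    obtain ⟨bs, css⟩ := S
    rw [homInto_node] at hS ⊢
    obtain ⟨hmark, hch⟩ := hR _ _ hRS
    refine ⟨fun hb => hS.1 (hmark hb), ?_⟩
    intro q hq
    obtain ⟨p, hp, hpl, hpR⟩ := hch q hq
    obtain ⟨z, hz, hzh⟩ := hS.2 p hp
    exact ⟨z, hpl ▸ hz, ih q.2 (sizeOf_child_lt hq) p.2 z hpR hzh⟩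
  exact fun T S x => key T S x

theorem eqv_node_iff (b₁ b₂ : Bool) (c₁ c₂ : List (α × PreTree α)) :
    eqv (.node b₁ c₁) (.node b₂ c₂) ↔
      (b₁ = b₂ ∧
       (∀ p ∈ c₁, ∃ q ∈ c₂, p.1 = q.1 ∧ eqv p.2 q.2) ∧
       (∀ q ∈ c₂, ∃ p : {x // x ∈ c₁}, p.1.1 = q.1 ∧ eqv p.1.2 q.2)) := by
  rw [PreTree.eqv]

theorem eqv_refl : ∀ T : PreTree α, eqv T T := by
  apply ptree_strongInduction
  rintro ⟨b, cs⟩ ih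
  rw [eqv_node_iff]
  exact ⟨rfl, fun p hp => ⟨p, hp, rfl, ih p.2 (sizeOf_child_lt hp)⟩,
    fun q hq => ⟨⟨q, hq⟩, rfl, ih q.2 (sizeOf_child_lt hq)⟩⟩

theorem eqv_backsim₁ : IsBacksim (fun S T : PreTree α => eqv S T) := by
  rintro ⟨b₁, c₁⟩ ⟨b₂, c₂⟩ h
  rw [eqv_node_iff] at h
  refine ⟨fun hb => by simp only [mark] at hb ⊢; rw [h.1]; exact hb, ?_⟩
  intro q hq
  obtain ⟨p, hpl, hpe⟩ := h.2.2 q hq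
  exact ⟨p.1, p.2, hpl, hpe⟩

theorem eqv_backsim₂ : IsBacksim (fun S T : PreTree α => eqv T S) := by
  rintro ⟨b₁, c₁⟩ ⟨b₂, c₂⟩ h
  rw [eqv_node_iff] at h
  refine ⟨fun hb => by simp only [mark] at hb ⊢; rw [← h.1]; exact hb, ?_⟩
  intro q hq
  obtain ⟨p, hp, hpl, hpe⟩ := h.2.1 q hq
  exact ⟨p, hp, hpl.symm, hpe⟩

theorem homInto_eqv {A B : PreTree α} (h : eqv A B) (g : α → X → X → Prop) (x y : X) :
    HomInto A g x y ↔ HomInto B g x y :=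
  ⟨backsim_homInto eqv_backsim₁ B A x h,
   backsim_homInto eqv_backsim₂ A B x h⟩

-- filter length helpers
theorem filter_length_mono {β : Type*} {P Q : β → Bool} :
    ∀ (L : List β), (∀ x ∈ L, P x = true → Q x = true) →
      (L.filter P).length ≤ (L.filter Q).length := by
  intro L
  induction L with
  | nil => simp
  | cons a L' ih =>
    intro h
    have hih := ih (fun x hx => h x (List.mem_cons_of_mem a hx))
    cases hP : P a with
    | true =>
      rw [List.filter_cons_of_pos hP, List.filter_cons_of_pos (h a (List.mem_cons_self (a := a) (l := L')) hP)]
      simpa using hih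
    | false =>
      rw [List.filter_cons_of_neg (by simp [hP])]
      cases hQ : Q a with
      | true =>
        rw [List.filter_cons_of_pos hQ]
        simp only [List.length_cons]
        omega
      | false =>
        rw [List.filter_cons_of_neg (by simp [hQ])]
        exact hih

theorem filter_length_lt {β : Type*} {P Q : β → Bool} :
    ∀ (L : List β) (w : β), w ∈ L → (∀ x ∈ L, P x = true → Q x = true) →
      Q w = true → P w = false →
      (L.filter P).length < (L.filter Q).length := by
  intro L
  induction L with
  | nil => intro w hw; cases hw
  | cons a L' ih =>
    intro w hw h hQw hPw
    have hmono := filter_length_mono L' (fun x hx => h x (List.mem_cons_of_mem a hx))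
    rcases List.mem_cons.mp hw with rfl | hw'
    · rw [List.filter_cons_of_neg (by simp [hPw]), List.filter_cons_of_pos hQw]
      simp only [List.length_cons]
      omega
    · have hlt := ih w hw' (fun x hx => h x (List.mem_cons_of_mem a hx)) hQw hPw
      cases hP : P a with
      | true =>
        rw [List.filter_cons_of_pos hP, List.filter_cons_of_pos (h a (List.mem_cons_self (a := a) (l := L')) hP)]
        simp only [List.length_cons]
        omega
      | false =>
        rw [List.filter_cons_of_neg (by simp [hP])]
        cases hQ : Q a with
        | true =>
          rw [List.filter_cons_of_pos hQ]
          simp only [List.length_cons]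
          omega
        | false =>
          rw [List.filter_cons_of_neg (by simp [hQ])]
          exact hlt

open Classical in
theorem exists_min_aux : ∀ (n : ℕ) (L : List (α × PreTree α)) (q : α × PreTree α), q ∈ L →
    (L.filter (fun s => decide (s.1 = q.1 ∧ s.2.le q.2))).length ≤ n →
    ∃ q' ∈ L, q'.1 = q.1 ∧ q'.2.le q.2 ∧
      ∀ r ∈ L, r.1 = q.1 → r.2.le q'.2 → q'.2.le r.2 := by
  intro n
  induction n with
  | zero =>
    intro L q hq hlen
    exfalso
    have : q ∈ L.filter (fun s => decide (s.1 = q.1 ∧ s.2.le q.2)) :=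
      List.mem_filter.mpr ⟨hq, by simp [ple_refl]⟩
    have := List.length_pos_of_mem this
    omega
  | succ n ih =>
    intro L q hq hlen
    by_cases hmin : ∀ r ∈ L, r.1 = q.1 → r.2.le q.2 → q.2.le r.2
    · exact ⟨q, hq, rfl, ple_refl q.2, hmin⟩
    · push_neg at hmin
      obtain ⟨r, hr, hr1, hrle, hnle⟩ := hmin
      have key : (L.filter (fun s => decide (s.1 = r.1 ∧ s.2.le r.2))).length <
          (L.filter (fun s => decide (s.1 = q.1 ∧ s.2.le q.2))).length := by
        apply filter_length_lt L q hq
        · intro x hx hP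
          rw [decide_eq_true_iff] at hP ⊢
          exact ⟨hP.1.trans hr1, ple_trans x.2 r.2 q.2 hP.2 hrle⟩
        · simp [ple_refl]
        · rw [decide_eq_false_iff_not]
          rintro ⟨-, hc⟩
          exact hnle hc
      obtain ⟨q', hq', hq'1, hq'le, hq'min⟩ := ih L r hr (by omega)
      refine ⟨q', hq', hq'1.trans hr1, ple_trans q'.2 r.2 q.2 hq'le hrle, ?_⟩
      intro s hs hs1 hsle
      exact hq'min s hs (hs1.trans hr1.symm) hsle

theorem exists_min (L : List (α × PreTree α)) (q : α × PreTree α) (hq : q ∈ L) :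
    ∃ q' ∈ L, q'.1 = q.1 ∧ q'.2.le q.2 ∧
      ∀ r ∈ L, r.1 = q.1 → r.2.le q'.2 → q'.2.le r.2 := by
  classical
  exact exists_min_aux _ L q hq (le_refl _)

end Aux4
section Aux5
open PreTree
open scoped Classical
variable {α : Type} {X : Type}

theorem reduce_node (b : Bool) (cs : List (α × PreTree α)) :
    reduce (PreTree.node b cs) = .node b
      ((cs.map fun p => (p.1, reduce p.2)).filter
        (fun q => decide (∀ q' ∈ cs.map fun p => (p.1, reduce p.2),
            q'.1 = q.1 → q'.2.le q.2 → q.2.le q'.2))) := by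
  rw [PreTree.reduce]
  have hm : (cs.attach.map fun p => (p.1.1, reduce p.1.2)) = cs.map fun p => (p.1, reduce p.2) :=
    List.attach_map_val (l := cs) (f := fun p => (p.1, reduce p.2))
  simp only [hm]
  congr 1
  apply List.filter_congr
  intro q hq
  exact decide_eq_decide.mpr Iff.rfl

end Aux5
section Aux5b
open PreTree
open scoped Classical
variable {α : Type} {X : Type}

theorem mark_reduce (T : PreTree α) : (reduce T).mark = T.mark := by
  obtain ⟨b, cs⟩ := T
  rw [reduce_node]
  rfl

theorem mem_reduce_children_iff {b : Bool} {cs : List (α × PreTree α)} {q : α × PreTree α} :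
    q ∈ (reduce (PreTree.node b cs)).children ↔
      (q ∈ cs.map fun p => (p.1, reduce p.2)) ∧
      (∀ q' ∈ cs.map fun p => (p.1, reduce p.2), q'.1 = q.1 → q'.2.le q.2 → q.2.le q'.2) := by
  rw [reduce_node]
  simp only [children, List.mem_filter, decide_eq_true_eq]

theorem reduce_eq_self_of (b : Bool) (l : List (α × PreTree α))
    (hred : ∀ p ∈ l, reduce p.2 = p.2)
    (hmin : ∀ q ∈ l, ∀ q' ∈ l, q'.1 = q.1 → q'.2.le q.2 → q.2.le q'.2) :
    reduce (PreTree.node b l) = .node b l := by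
  rw [reduce_node]
  rw [map_eq_self_of hred]
  congr 1
  apply List.filter_eq_self.mpr
  intro q hq
  simp only [decide_eq_true_eq]
  exact hmin q hq

theorem reduce_reduce : ∀ T : PreTree α, reduce (reduce T) = reduce T := by
  apply ptree_strongInduction
  rintro ⟨b, cs⟩ ih
  rcases hR : reduce (PreTree.node b cs) with ⟨b', l⟩
  have hb' : b' = b := by
    have := mark_reduce (PreTree.node b cs)
    rw [hR] at this
    exact this
  rw [hb']
  rw [hb'] at hR
  have hmem : ∀ p ∈ l, p ∈ (reduce (PreTree.node b cs)).children := by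
    intro p hp
    rw [hR]
    exact hp
  apply reduce_eq_self_of
  · intro p hp
    obtain ⟨hmap, -⟩ := mem_reduce_children_iff.mp (hmem p hp)
    obtain ⟨c, hc, rfl⟩ := List.mem_map.mp hmap
    exact ih c.2 (sizeOf_child_lt hc)
  · intro q hq q' hq' h1 h2
    obtain ⟨-, hminq⟩ := mem_reduce_children_iff.mp (hmem q hq)
    obtain ⟨hmap', -⟩ := mem_reduce_children_iff.mp (hmem q' hq')
    exact hminq q' hmap' h1 h2

theorem reduced_node_iff {b : Bool} {cs : List (α × PreTree α)} :
    Reduced (PreTree.node b cs) ↔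
      ((∀ p ∈ cs, Reduced p.2) ∧
       ∀ q ∈ cs, ∀ q' ∈ cs, q'.1 = q.1 → q'.2.le q.2 → q.2.le q'.2) := by
  constructor
  · intro h
    have hmem : ∀ p ∈ cs, p ∈ (reduce (PreTree.node b cs)).children := by
      intro p hp
      rw [h]
      exact hp
    have hred : ∀ p ∈ cs, Reduced p.2 := by
      intro p hp
      obtain ⟨hmap, -⟩ := mem_reduce_children_iff.mp (hmem p hp)
      obtain ⟨c, hc, rfl⟩ := List.mem_map.mp hmap
      exact reduce_reduce c.2
    refine ⟨hred, ?_⟩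
    intro q hq q' hq' h1 h2
    obtain ⟨-, hminq⟩ := mem_reduce_children_iff.mp (hmem q hq)
    have : (q'.1, reduce q'.2) ∈ cs.map fun p => (p.1, reduce p.2) :=
      List.mem_map_of_mem hq'
    rw [hred q' hq'] at this
    exact hminq q' this h1 h2
  · rintro ⟨hred, hmin⟩
    exact reduce_eq_self_of b cs hred hmin

theorem reduced_children {b : Bool} {cs : List (α × PreTree α)}
    (h : Reduced (PreTree.node b cs)) : ∀ p ∈ cs, Reduced p.2 :=
  (reduced_node_iff.mp h).1

theorem reduce_child_min {b : Bool} {cs : List (α × PreTree α)} {c : α × PreTree α}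
    (hc : c ∈ cs) : ∃ q ∈ (reduce (PreTree.node b cs)).children,
      q.1 = c.1 ∧ q.2.le (reduce c.2) := by
  have hmem : (c.1, reduce c.2) ∈ cs.map fun p => (p.1, reduce p.2) :=
    List.mem_map_of_mem hc
  obtain ⟨q', hq', hq'1, hq'le, hq'min⟩ := exists_min _ _ hmem
  refine ⟨q', ?_, hq'1, hq'le⟩
  rw [mem_reduce_children_iff]
  refine ⟨hq', ?_⟩
  intro r hr h1 h2
  exact hq'min r hr (h1.trans hq'1) h2

theorem reduce_children_ne_nil {b : Bool} {cs : List (α × PreTree α)} (h : cs ≠ []) :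
    (reduce (PreTree.node b cs)).children ≠ [] := by
  obtain ⟨c, hc⟩ := List.exists_mem_of_ne_nil cs h
  obtain ⟨q, hq, -⟩ := reduce_child_min (b := b) hc
  exact List.ne_nil_of_mem hq

theorem backsim_R₁ : IsBacksim (fun S T : PreTree α => T = reduce S) := by
  rintro S T h
  subst h
  obtain ⟨b, cs⟩ := S
  constructor
  · rw [mark_reduce]
    exact fun h => h
  · intro q hq
    obtain ⟨hmem, -⟩ := mem_reduce_children_iff.mp hq
    obtain ⟨c, hc, rfl⟩ := List.mem_map.mp hmem
    exact ⟨c, hc, rfl, rfl⟩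

theorem backsim_R₂ : IsBacksim (fun S T : PreTree α => S.le (reduce T)) := by
  rintro S T h
  obtain ⟨b, cs⟩ := T
  obtain ⟨bs, css⟩ := S
  constructor
  · intro hb
    rw [reduce_node, le_node_iff] at h
    simp only [mark] at hb ⊢
    exact h.1 hb
  · intro q hq
    simp only [children] at hq
    obtain ⟨r, hr, hr1, hrle⟩ := reduce_child_min (b := b) hq
    rcases hR : reduce (PreTree.node b cs) with ⟨b', l⟩
    rw [hR] at h hr
    rw [le_node_iff] at h
    simp only [children] at hr
    obtain ⟨p, hp, hpl, hple⟩ := h.2 r hr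
    exact ⟨p, hp, hpl.trans hr1, ple_trans p.2 r.2 (reduce q.2) hple hrle⟩

theorem homInto_reduce (T : PreTree α) (g : α → X → X → Prop) (x y : X) :
    HomInto (reduce T) g x y ↔ HomInto T g x y := by
  constructor
  · intro h
    exact backsim_homInto backsim_R₂ T (reduce T) x (ple_refl (reduce T)) h
  · intro h
    exact backsim_homInto backsim_R₁ (reduce T) T x rfl h

end Aux5b
section Aux6
open PreTree
variable {α : Type} {X : Type}

theorem sum_one_le {cs : List (α × PreTree α)}
    (hT : (cs.map fun p => markCount p.2).sum = 1) {p : α × PreTree α} (hp : p ∈ cs) :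
    markCount p.2 ≤ 1 := by
  have := List.single_le_sum (l := cs.map fun p => markCount p.2)
    (fun x _ => Nat.zero_le x) _ (List.mem_map_of_mem hp)
  omega

theorem exists_marked {cs : List (α × PreTree α)}
    (h : (cs.map fun p => markCount p.2).sum = 1) : ∃ c ∈ cs, markCount c.2 = 1 := by
  induction cs with
  | nil => simp at h
  | cons a l ih =>
    simp only [List.map_cons, List.sum_cons] at h
    rcases Nat.eq_zero_or_pos (markCount a.2) with h0 | hpos
    · rw [h0] at h
      simp only [Nat.zero_add] at h
      obtain ⟨c, hc, hc1⟩ := ih h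
      exact ⟨c, List.mem_cons_of_mem _ hc, hc1⟩
    · exact ⟨a, List.mem_cons_self (a := a) (l := l), by omega⟩

theorem marked_unique {cs : List (α × PreTree α)}
    (h : (cs.map fun p => markCount p.2).sum = 1) :
    ∀ p ∈ cs, markCount p.2 = 1 → ∀ q ∈ cs, markCount q.2 = 1 → p = q := by
  induction cs with
  | nil => intro p hp; cases hp
  | cons a l ih =>
    simp only [List.map_cons, List.sum_cons] at h
    intro p hp hp1 q hq hq1
    have hsum0 : markCount a.2 = 1 → (l.map fun p => markCount p.2).sum = 0 := by omega
    rcases List.mem_cons.mp hp with rfl | hp' <;> rcases List.mem_cons.mp hq with rfl | hq'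
    · rfl
    · exfalso
      have := List.sum_eq_zero_iff.mp (hsum0 hp1) _ (List.mem_map_of_mem hq')
      omega
    · exfalso
      have := List.sum_eq_zero_iff.mp (hsum0 hq1) _ (List.mem_map_of_mem hp')
      omega
    · rcases Nat.eq_zero_or_pos (markCount a.2) with h0 | hpos
      · rw [h0] at h
        simp only [Nat.zero_add] at h
        exact ih h p hp' hp1 q hq' hq1
      · exfalso
        have := List.sum_eq_zero_iff.mp (hsum0 (by omega)) _ (List.mem_map_of_mem hp')
        omega

theorem child_mc_le_one {b : Bool} {cs : List (α × PreTree α)}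
    (h : markCount (.node b cs) ≤ 1) : ∀ p ∈ cs, markCount p.2 ≤ 1 := by
  intro p hp
  rw [markCount_node] at h
  have := List.single_le_sum (l := cs.map fun p => markCount p.2)
    (fun x _ => Nat.zero_le x) _ (List.mem_map_of_mem hp)
  omega

theorem homInto_unmark {g : α → X → X → Prop} :
    ∀ c : PreTree α, c.markCount ≤ 1 → ∀ w y : X,
      (HomInto (unmark c) g w y ↔ ∃ z, HomInto c g w z) := by
  apply ptree_strongInduction
  rintro ⟨bc, ds⟩ ih hmc w y
  have hdle : ∀ d ∈ ds, markCount d.2 ≤ 1 := child_mc_le_one hmc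
  rw [unmark_node]
  simp only [homInto_node]
  constructor
  · rintro ⟨-, hch⟩
    cases bc with
    | true =>
      have hsum0 : ∀ d ∈ ds, markCount d.2 = 0 := by
        rw [markCount_node] at hmc
        simp only [cond_true] at hmc
        intro d hd
        have := List.single_le_sum (l := ds.map fun p => markCount p.2)
          (fun x _ => Nat.zero_le x) _ (List.mem_map_of_mem hd)
        omega
      refine ⟨w, ⟨fun _ => rfl, ?_⟩⟩
      intro d hd
      obtain ⟨v, hv, hvh⟩ := hch (d.1, unmark d.2) (List.mem_map_of_mem hd)
      rw [unmark_eq_self d.2 (hsum0 d hd)] at hvh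
      exact ⟨v, hv, homInto_target_irrel (hsum0 d hd) hvh⟩
    | false =>
      rw [markCount_node] at hmc
      simp only [cond_false, Nat.zero_add] at hmc
      rcases Nat.eq_zero_or_pos ((ds.map fun p => markCount p.2).sum) with hs0 | hs1
      · -- all children unmarked, take z := y
        have hall : ∀ d ∈ ds, markCount d.2 = 0 := by
          intro d hd
          exact List.sum_eq_zero_iff.mp hs0 _ (List.mem_map_of_mem hd)
        refine ⟨y, ⟨(fun h => nomatch h), ?_⟩⟩
        intro d hd
        obtain ⟨v, hv, hvh⟩ := hch (d.1, unmark d.2) (List.mem_map_of_mem hd)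
        rw [unmark_eq_self d.2 (hall d hd)] at hvh
        exact ⟨v, hv, hvh⟩
      · have hs : (ds.map fun p => markCount p.2).sum = 1 := by omega
        obtain ⟨c₀, hc₀, hc₀1⟩ := exists_marked hs
        obtain ⟨v, hv, hvh⟩ := hch (c₀.1, unmark c₀.2) (List.mem_map_of_mem hc₀)
        obtain ⟨z, hz⟩ := (ih c₀.2 (sizeOf_child_lt hc₀) (by omega) v y).mp hvh
        refine ⟨z, ⟨(fun h => nomatch h), ?_⟩⟩
        intro d hd
        rcases Nat.eq_zero_or_pos (markCount d.2) with h0 | hpos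
        · obtain ⟨v', hv', hvh'⟩ := hch (d.1, unmark d.2) (List.mem_map_of_mem hd)
          rw [unmark_eq_self d.2 h0] at hvh'
          exact ⟨v', hv', homInto_target_irrel h0 hvh'⟩
        · have hd1 : markCount d.2 = 1 := by have := sum_one_le hs hd; omega
          have : d = c₀ := marked_unique hs d hd hd1 c₀ hc₀ hc₀1
          subst this
          exact ⟨v, hv, hz⟩
  · rintro ⟨z, hb, hch⟩
    refine ⟨(fun h => nomatch h), ?_⟩
    intro d hd
    obtain ⟨d₀, hd₀, rfl⟩ := List.mem_map.mp hd
    obtain ⟨v, hv, hvh⟩ := hch d₀ hd₀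
    rcases Nat.eq_zero_or_pos (markCount d₀.2) with h0 | hpos
    · rw [unmark_eq_self d₀.2 h0]
      exact ⟨v, hv, homInto_target_irrel h0 hvh⟩
    · have hd1 : markCount d₀.2 = 1 := by have := hdle d₀ hd₀; omega
      exact ⟨v, hv, (ih d₀.2 (sizeOf_child_lt hd₀) (by omega) v y).mpr ⟨z, hvh⟩⟩

theorem homInto_graft {g : α → X → X → Prop} (S : PreTree α) :
    ∀ T : PreTree α, T.markCount = 1 → ∀ x y : X,
      (HomInto (graft S T) g x y ↔ ∃ z, HomInto T g x z ∧ HomInto S g z y) := by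
  apply ptree_strongInduction
  rintro ⟨b, cs⟩ ih hT x y
  cases b with
  | true =>
    have h0 : ∀ p ∈ cs, markCount p.2 = 0 := child_markCount_zero_of_true hT
    obtain ⟨bs, css⟩ := S
    rw [graft_node_true]
    simp only [mark, children, homInto_node]
    constructor
    · rintro ⟨hb, hch⟩
      refine ⟨x, ⟨fun _ => rfl, ?_⟩, hb, ?_⟩
      · intro p hp
        obtain ⟨z, hz, hzh⟩ := hch p (List.mem_append_left _ hp)
        exact ⟨z, hz, homInto_target_irrel (h0 p hp) hzh⟩
      · intro p hp
        exact hch p (List.mem_append_right _ hp)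
    · rintro ⟨z, ⟨hxz, hchT⟩, hbs, hchS⟩
      have hxz : x = z := hxz (by trivial)
      subst hxz
      refine ⟨hbs, ?_⟩
      intro p hp
      rcases List.mem_append.mp hp with hp | hp
      · obtain ⟨w, hw, hwh⟩ := hchT p hp
        exact ⟨w, hw, homInto_target_irrel (h0 p hp) hwh⟩
      · exact hchS p hp
  | false =>
    rw [markCount_node] at hT
    simp only [cond_false, Nat.zero_add] at hT
    rw [graft_node_false]
    simp only [homInto_node]
    constructor
    · rintro ⟨-, hch⟩
      obtain ⟨c, hc, hc1⟩ := exists_marked hT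
      obtain ⟨w, hw, hwh⟩ := hch (c.1, graft S c.2) (List.mem_map_of_mem hc)
      obtain ⟨z, hz1, hz2⟩ := (ih c.2 (sizeOf_child_lt hc) hc1 w y).mp hwh
      refine ⟨z, ⟨(fun h => nomatch h), ?_⟩, hz2⟩
      intro p hp
      rcases Nat.eq_zero_or_pos (markCount p.2) with h0 | hpos
      · obtain ⟨w', hw', hwh'⟩ := hch (p.1, graft S p.2) (List.mem_map_of_mem hp)
        rw [graft_eq_self S p.2 h0] at hwh'
        exact ⟨w', hw', homInto_target_irrel h0 hwh'⟩
      · have hp1 : markCount p.2 = 1 := by have := sum_one_le hT hp; omega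
        have hpc : p = c := marked_unique hT p hp hp1 c hc hc1
        subst hpc
        exact ⟨w, hw, hz1⟩
    · rintro ⟨z, ⟨-, hch⟩, hSz⟩
      refine ⟨(fun h => nomatch h), ?_⟩
      intro p hp
      obtain ⟨p₀, hp₀, rfl⟩ := List.mem_map.mp hp
      obtain ⟨w, hw, hwh⟩ := hch p₀ hp₀
      rcases Nat.eq_zero_or_pos (markCount p₀.2) with h0 | hpos
      · rw [graft_eq_self S p₀.2 h0]
        exact ⟨w, hw, homInto_target_irrel h0 hwh⟩
      · have hp1 : markCount p₀.2 = 1 := by have := sum_one_le hT hp₀; omega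
        exact ⟨w, hw, (ih p₀.2 (sizeOf_child_lt hp₀) hp1 w y).mpr ⟨z, hwh, hSz⟩⟩

theorem homInto_pointAtRoot {g : α → X → X → Prop} (T : PreTree α) (hT : T.markCount = 1)
    (x y : X) :
    HomInto (pointAtRoot T) g x y ↔ (x = y ∧ ∃ z, HomInto T g x z) := by
  obtain ⟨b, cs⟩ := T
  have hdle : ∀ p ∈ cs, markCount p.2 ≤ 1 := child_mc_le_one (le_of_eq hT)
  rw [PreTree.pointAtRoot, unmark_node]
  simp only [children, homInto_node]
  constructor
  · rintro ⟨hxy, hch⟩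
    refine ⟨hxy (by trivial), ?_⟩
    cases b with
    | true =>
      have h0 : ∀ p ∈ cs, markCount p.2 = 0 := child_markCount_zero_of_true hT
      refine ⟨x, ⟨fun _ => rfl, ?_⟩⟩
      intro p hp
      obtain ⟨v, hv, hvh⟩ := hch (p.1, unmark p.2) (List.mem_map_of_mem hp)
      rw [unmark_eq_self p.2 (h0 p hp)] at hvh
      exact ⟨v, hv, homInto_target_irrel (h0 p hp) hvh⟩
    | false =>
      rw [markCount_node] at hT
      simp only [cond_false, Nat.zero_add] at hT
      obtain ⟨c, hc, hc1⟩ := exists_marked hT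
      obtain ⟨v, hv, hvh⟩ := hch (c.1, unmark c.2) (List.mem_map_of_mem hc)
      obtain ⟨z, hz⟩ := (homInto_unmark c.2 (by omega) v y).mp hvh
      refine ⟨z, ⟨(fun h => nomatch h), ?_⟩⟩
      intro p hp
      rcases Nat.eq_zero_or_pos (markCount p.2) with h0 | hpos
      · obtain ⟨v', hv', hvh'⟩ := hch (p.1, unmark p.2) (List.mem_map_of_mem hp)
        rw [unmark_eq_self p.2 h0] at hvh'
        exact ⟨v', hv', homInto_target_irrel h0 hvh'⟩
      · have hp1 : markCount p.2 = 1 := by have := sum_one_le hT hp; omega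
        have hpc : p = c := marked_unique hT p hp hp1 c hc hc1
        subst hpc
        exact ⟨v, hv, hz⟩
  · rintro ⟨hxy, z, hb, hch⟩
    refine ⟨fun _ => hxy, ?_⟩
    intro p hp
    obtain ⟨p₀, hp₀, rfl⟩ := List.mem_map.mp hp
    obtain ⟨v, hv, hvh⟩ := hch p₀ hp₀
    rcases Nat.eq_zero_or_pos (markCount p₀.2) with h0 | hpos
    · rw [unmark_eq_self p₀.2 h0]
      exact ⟨v, hv, homInto_target_irrel h0 hvh⟩
    · have hp1 : markCount p₀.2 = 1 := by have := hdle p₀ hp₀; omega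
      exact ⟨v, hv, (homInto_unmark p₀.2 (by omega) v y).mpr ⟨z, hvh⟩⟩

end Aux6
section Aux7
open PreTree
variable {α : Type} {X : Type}

theorem le_markCount_pos : ∀ B A : PreTree α, A.le B → 0 < B.markCount → 0 < A.markCount := by
  apply ptree_strongInduction
  rintro ⟨b, cs⟩ ih ⟨ba, csa⟩ hle hpos
  rw [le_node_iff] at hle
  rw [markCount_node] at hpos ⊢
  cases b with
  | true =>
    have : ba = true := hle.1 rfl
    subst this
    simp
  | false =>
    simp only [cond_false, Nat.zero_add] at hpos
    have : ∃ q ∈ cs, 0 < markCount q.2 := by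
      by_contra hcon
      push_neg at hcon
      have : (cs.map fun p => markCount p.2).sum = 0 := by
        rw [List.sum_eq_zero_iff]
        intro x hx
        obtain ⟨q, hq, rfl⟩ := List.mem_map.mp hx
        have := hcon q hq
        omega
      omega
    obtain ⟨q, hq, hqpos⟩ := this
    obtain ⟨p, hp, hpl, hple⟩ := hle.2 q hq
    have := ih q.2 (sizeOf_child_lt hq) p.2 hple hqpos
    have hmem : markCount p.2 ∈ csa.map fun p => markCount p.2 := List.mem_map_of_mem hp
    have := List.single_le_sum (l := csa.map fun p => markCount p.2)
      (fun x _ => Nat.zero_le x) _ hmem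
    omega

theorem markCount_reduce_le : ∀ T : PreTree α, (reduce T).markCount ≤ T.markCount := by
  apply ptree_strongInduction
  rintro ⟨b, cs⟩ ih
  rw [reduce_node, markCount_node, markCount_node]
  have key : ∀ (P : (α × PreTree α) → Bool) (L : List (α × PreTree α)),
      ((L.filter P).map fun p => markCount p.2).sum ≤ (L.map fun p => markCount p.2).sum :=
    fun P L => ((L.filter_sublist).map _).sum_le_sum (fun x _ => Nat.zero_le x)
  have h2 : (((cs.map fun p => (p.1, reduce p.2)).map fun p => markCount p.2)).sum ≤
      ((cs.map fun p => markCount p.2)).sum := by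
    rw [List.map_map]
    apply List.sum_le_sum
    intro p hp
    exact ih p.2 (sizeOf_child_lt hp)
  exact Nat.add_le_add_left (le_trans (key _ _) h2) _

theorem markCount_reduce_pos : ∀ T : PreTree α, 0 < T.markCount → 0 < (reduce T).markCount := by
  apply ptree_strongInduction
  rintro ⟨b, cs⟩ ih hpos
  cases b with
  | true =>
    rcases hRR : reduce (PreTree.node true cs) with ⟨b', l⟩
    have hb' : b' = true := by
      have := mark_reduce (PreTree.node true cs)
      rw [hRR] at this
      exact this
    subst hb'
    rw [markCount_node]
    simp
  | false =>
    rw [markCount_node] at hpos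
    simp only [cond_false, Nat.zero_add] at hpos
    have : ∃ c ∈ cs, 0 < markCount c.2 := by
      by_contra hcon
      push_neg at hcon
      have : (cs.map fun p => markCount p.2).sum = 0 := by
        rw [List.sum_eq_zero_iff]
        intro x hx
        obtain ⟨q, hq, rfl⟩ := List.mem_map.mp hx
        have := hcon q hq
        omega
      omega
    obtain ⟨c, hc, hcpos⟩ := this
    obtain ⟨q, hq, hql, hqle⟩ := reduce_child_min (b := false) hc
    have hrpos : 0 < markCount (reduce c.2) := ih c.2 (sizeOf_child_lt hc) hcpos
    have hqpos : 0 < markCount q.2 := le_markCount_pos (reduce c.2) q.2 hqle hrpos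
    rcases hRR : reduce (PreTree.node false cs) with ⟨b', l⟩
    rw [hRR] at hq
    simp only [children] at hq
    rw [markCount_node]
    have hmem : markCount q.2 ∈ l.map fun p => markCount p.2 := List.mem_map_of_mem hq
    have := List.single_le_sum (l := l.map fun p => markCount p.2)
      (fun x _ => Nat.zero_le x) _ hmem
    omega

theorem pointed_reduce {T : PreTree α} (h : T.markCount = 1) : (reduce T).markCount = 1 := by
  have h1 := markCount_reduce_le T
  have h2 := markCount_reduce_pos T (by omega)
  omega

theorem eqv_trivial_iff {b : Bool} {cs : List (α × PreTree α)} :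
    eqv (PreTree.node b cs) trivialTree ↔ (b = true ∧ cs = []) := by
  rw [trivialTree, eqv_node_iff]
  constructor
  · rintro ⟨hb, h1, -⟩
    refine ⟨hb, ?_⟩
    rw [List.eq_nil_iff_forall_not_mem]
    intro p hp
    obtain ⟨q, hq, -⟩ := h1 p hp
    exact absurd hq List.not_mem_nil
  · rintro ⟨hb, rfl⟩
    exact ⟨hb, fun p hp => absurd hp List.not_mem_nil, fun q hq => absurd hq List.not_mem_nil⟩

theorem good_children_ne_nil {b : Bool} {cs : List (α × PreTree α)}
    (hP : Pointed (PreTree.node b cs)) (hNT : ¬ eqv (PreTree.node b cs) trivialTree) :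
    cs ≠ [] := by
  intro hnil
  subst hnil
  rw [PreTree.Pointed, markCount_node] at hP
  simp only [List.map_nil, List.sum_nil, Nat.add_zero] at hP
  cases b with
  | false => simp at hP
  | true => exact hNT (eqv_trivial_iff.mpr ⟨rfl, rfl⟩)

theorem not_eqv_trivial_reduce {b : Bool} {cs : List (α × PreTree α)} (h : cs ≠ []) :
    ¬ eqv (reduce (PreTree.node b cs)) trivialTree := by
  intro hcon
  have hl := reduce_children_ne_nil (b := b) h
  cases hRe : reduce (PreTree.node b cs) with
  | node b' l =>
    rw [hRe] at hcon hl
    simp only [children] at hl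
    rw [eqv_trivial_iff] at hcon
    exact hl hcon.2

theorem good_concat {T S : PreTree α}
    (hT : T.Reduced ∧ T.Pointed ∧ ¬ eqv T trivialTree)
    (hS : S.Reduced ∧ S.Pointed ∧ ¬ eqv S trivialTree) :
    (concat T S).Reduced ∧ (concat T S).Pointed ∧ ¬ eqv (concat T S) trivialTree := by
  obtain ⟨hTr, hTp, hTnt⟩ := hT
  obtain ⟨hSr, hSp, hSnt⟩ := hS
  refine ⟨reduce_reduce _, pointed_reduce (by rw [markCount_graft T hTp]; exact hSp), ?_⟩
  obtain ⟨b, cs⟩ := T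
  have hcs : cs ≠ [] := good_children_ne_nil hTp hTnt
  cases b with
  | true =>
    rw [concat, graft_node_true]
    exact not_eqv_trivial_reduce (by simp [hcs])
  | false =>
    rw [concat, graft_node_false]
    exact not_eqv_trivial_reduce (by simp [hcs])

theorem good_dom {T : PreTree α}
    (hT : T.Reduced ∧ T.Pointed ∧ ¬ eqv T trivialTree) :
    (domTree T).Reduced ∧ (domTree T).Pointed ∧ ¬ eqv (domTree T) trivialTree := by
  obtain ⟨hTr, hTp, hTnt⟩ := hT
  refine ⟨reduce_reduce _, pointed_reduce (markCount_pointAtRoot T), ?_⟩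
  obtain ⟨b, cs⟩ := T
  have hcs : cs ≠ [] := good_children_ne_nil hTp hTnt
  rw [domTree, PreTree.pointAtRoot, unmark_node]
  simp only [children]
  exact not_eqv_trivial_reduce (by simp [hcs])

end Aux7
section Aux8
open PreTree
variable {α : Type} {X : Type}

/-- Measure for the decomposition induction. -/
noncomputable def treeMu (T : PreTree α) : ℕ := 2 * sizeOf T + (cond T.mark 1 0)

theorem one_le_sizeOf_prod (p : α × PreTree α) : 1 ≤ sizeOf p := by
  obtain ⟨x, y⟩ := p
  simp
  try omega

theorem reduced_singleton {b : Bool} {x : α × PreTree α} (h : Reduced x.2) :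
    Reduced (PreTree.node b [x]) := by
  rw [reduced_node_iff]
  constructor
  · intro p hp
    simp only [List.mem_singleton] at hp
    subst hp
    exact h
  · intro q hq q' hq' h1 h2
    simp only [List.mem_singleton] at hq hq'
    subst hq; subst hq'
    exact h2

theorem reduced_subset {b b' : Bool} {cs ds : List (α × PreTree α)}
    (h : Reduced (PreTree.node b cs)) (hsub : ∀ x ∈ ds, x ∈ cs) :
    Reduced (PreTree.node b' ds) := by
  rw [reduced_node_iff] at h ⊢
  exact ⟨fun p hp => h.1 p (hsub p hp),
    fun q hq q' hq' => h.2 q (hsub q hq) q' (hsub q' hq')⟩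

theorem eqv_same_mem {b : Bool} {cs ds : List (α × PreTree α)}
    (h : ∀ x, x ∈ cs ↔ x ∈ ds) : eqv (PreTree.node b cs) (PreTree.node b ds) := by
  rw [eqv_node_iff]
  exact ⟨rfl, fun p hp => ⟨p, (h p).mp hp, rfl, eqv_refl p.2⟩,
    fun q hq => ⟨⟨q, (h q).mpr hq⟩, rfl, eqv_refl q.2⟩⟩

theorem good_arrow (a : α) :
    (arrow a).Reduced ∧ (arrow a).Pointed ∧ ¬ eqv (arrow a) trivialTree := by
  refine ⟨?_, ?_, ?_⟩
  · rw [arrow]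
    exact reduced_singleton (reduce_eq_self_of true []
      (fun p hp => absurd hp List.not_mem_nil)
      (fun q hq => absurd hq List.not_mem_nil))
  · rw [PreTree.Pointed, arrow, markCount_node]
    simp [markCount_node]
  · rw [arrow, eqv_trivial_iff]
    simp

theorem decomp (T : PreTree α) (hR : Reduced T) (hP : Pointed T)
    (hNT : ¬ eqv T trivialTree) :
    (∃ a, eqv T (arrow a)) ∨
    (∃ A B : PreTree α, (A.Reduced ∧ A.Pointed ∧ ¬ eqv A trivialTree) ∧
        (B.Reduced ∧ B.Pointed ∧ ¬ eqv B trivialTree) ∧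
        treeMu A < treeMu T ∧ treeMu B < treeMu T ∧ eqv T (concat A B)) ∨
    (∃ A : PreTree α, (A.Reduced ∧ A.Pointed ∧ ¬ eqv A trivialTree) ∧
        treeMu A < treeMu T ∧ eqv T (domTree A)) := by
  obtain ⟨b, cs⟩ := T
  have hcs : cs ≠ [] := good_children_ne_nil hP hNT
  have hP' : markCount (PreTree.node b cs) = 1 := hP
  cases b with
  | true =>
    have h0 : ∀ p ∈ cs, markCount p.2 = 0 := child_markCount_zero_of_true hP'
    cases cs with
    | nil => exact absurd rfl hcs
    | cons c rest =>
      cases rest with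
      | nil =>
        -- T = node true [c] : use domTree
        obtain ⟨a, u⟩ := c
        have hu0 : markCount u = 0 := h0 (a, u) (List.mem_cons_self (a := _) (l := _))
        obtain ⟨bu, ds⟩ := u
        have hbu : bu = false := mark_of_markCount_zero hu0
        subst hbu
        have hds0 : ∀ p ∈ ds, markCount p.2 = 0 := child_markCount_zero hu0
        have hured : Reduced (PreTree.node false ds) :=
          reduced_children hR (a, .node false ds) (List.mem_cons_self (a := _) (l := _))
        refine Or.inr (Or.inr ⟨.node false [(a, .node true ds)], ⟨?_, ?_, ?_⟩, ?_, ?_⟩)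
        · exact reduced_singleton
            (reduced_node_iff.mpr (reduced_node_iff.mp hured))
        · rw [PreTree.Pointed, markCount_node]
          simp only [cond_false, Nat.zero_add, List.map_cons, List.map_nil, List.sum_cons,
            List.sum_nil]
          rw [markCount_node]
          have : (ds.map fun p => markCount p.2).sum = 0 :=
            List.sum_eq_zero_iff.mpr (by
              intro x hx
              obtain ⟨q, hq, rfl⟩ := List.mem_map.mp hx
              exact hds0 q hq)
          simp [this]
        · rw [eqv_trivial_iff]; simp
        · rw [treeMu, treeMu]
          simp only [mark, cond_false, cond_true]
          simp
          try omega
        · rw [domTree, PreTree.pointAtRoot, unmark_node]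
          simp only [children, List.map_cons, List.map_nil]
          rw [unmark_node]
          rw [map_eq_self_of (fun p hp => unmark_eq_self p.2 (hds0 p hp))]
          rw [hR]
          exact eqv_refl _
      | cons c₁ rest' =>
        -- T = node true (c :: c₁ :: rest') : split off first child
        refine Or.inr (Or.inl ⟨.node true [c], .node true (c₁ :: rest'), ⟨?_, ?_, ?_⟩,
          ⟨?_, ?_, ?_⟩, ?_, ?_, ?_⟩)
        · exact reduced_singleton (reduced_children hR c (List.mem_cons_self (a := _) (l := _)))
        · rw [PreTree.Pointed, markCount_node]
          simp [h0 c (List.mem_cons_self (a := _) (l := _))]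
        · rw [eqv_trivial_iff]; simp
        · exact reduced_subset hR (fun x hx => List.mem_cons_of_mem _ hx)
        · have hsum : ((c₁ :: rest').map fun p => markCount p.2).sum = 0 :=
            List.sum_eq_zero_iff.mpr (by
              intro x hx
              obtain ⟨q, hq, rfl⟩ := List.mem_map.mp hx
              exact h0 q (List.mem_cons_of_mem _ hq))
          rw [PreTree.Pointed, markCount_node, hsum]
          rfl
        · rw [eqv_trivial_iff]; simp
        · have h1 := one_le_sizeOf_prod c₁
          rw [treeMu, treeMu]; simp only [mark]; simp; try omega
        · have h1 := one_le_sizeOf_prod c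
          rw [treeMu, treeMu]; simp only [mark]; simp; try omega
        · rw [concat, graft_node_true]
          simp only [mark, children, List.singleton_append]
          rw [hR]
          exact eqv_refl _
  | false =>
    rw [markCount_node] at hP'
    simp only [cond_false, Nat.zero_add] at hP'
    cases cs with
    | nil => exact absurd rfl hcs
    | cons c₀ rest =>
      rcases Nat.eq_zero_or_pos (markCount c₀.2) with hc₀0 | hc₀pos
      · -- head unmarked: T = (node true [c₀]) ∘ (node false rest)
        have hrest1 : (rest.map fun p => markCount p.2).sum = 1 := by
          simp only [List.map_cons, List.sum_cons, hc₀0] at hP'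
          omega
        refine Or.inr (Or.inl ⟨.node true [c₀], .node false rest, ⟨?_, ?_, ?_⟩,
          ⟨?_, ?_, ?_⟩, ?_, ?_, ?_⟩)
        · exact reduced_singleton (reduced_children hR c₀ (List.mem_cons_self (a := _) (l := _)))
        · rw [PreTree.Pointed, markCount_node]; simp [hc₀0]
        · rw [eqv_trivial_iff]; simp
        · exact reduced_subset hR (fun x hx => List.mem_cons_of_mem _ hx)
        · rw [PreTree.Pointed, markCount_node]; simp [hrest1]
        · rw [eqv_trivial_iff]; simp
        · rw [treeMu, treeMu]; simp only [mark]; simp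
          have : rest ≠ [] := by
            intro h; rw [h] at hrest1; simp at hrest1
          cases rest with
          | nil => exact absurd rfl this
          | cons r rs =>
            have h1 := one_le_sizeOf_prod r
            have h2 := one_le_sizeOf_prod c₀
            simp
            try omega
        · have h1 := one_le_sizeOf_prod c₀
          rw [treeMu, treeMu]; simp only [mark]; simp; try omega
        · rw [concat, graft_node_true]
          simp only [mark, children, List.singleton_append]
          rw [hR]
          exact eqv_refl _
      · -- head marked
        have hc₀1 : markCount c₀.2 = 1 := by
          have := sum_one_le hP' (List.mem_cons_self (a := c₀) (l := rest))
          omega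
        have hrest0 : ∀ p ∈ rest, markCount p.2 = 0 := by
          intro p hp
          simp only [List.map_cons, List.sum_cons, hc₀1] at hP'
          have : (rest.map fun p => markCount p.2).sum = 0 := by omega
          exact List.sum_eq_zero_iff.mp this _ (List.mem_map_of_mem hp)
        cases rest with
        | nil =>
          -- single child, marked: arrow or (arrow a) ∘ t
          obtain ⟨a, t⟩ := c₀
          obtain ⟨bt, dt⟩ := t
          by_cases htriv : bt = true ∧ dt = []
          · obtain ⟨hbt, hdt⟩ := htriv
            subst hbt; subst hdt
            exact Or.inl ⟨a, eqv_refl _⟩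
          · have hdt : dt ≠ [] := by
              intro hnil
              subst hnil
              cases bt with
              | true => exact htriv ⟨rfl, rfl⟩
              | false => rw [markCount_node] at hc₀1; simp at hc₀1
            refine Or.inr (Or.inl ⟨arrow a, .node bt dt, good_arrow a,
              ⟨?_, ?_, ?_⟩, ?_, ?_, ?_⟩)
            · exact reduced_children hR (a, .node bt dt) (List.mem_cons_self (a := _) (l := _))
            · exact hc₀1
            · rw [eqv_trivial_iff]
              rintro ⟨h1, h2⟩
              exact htriv ⟨h1, h2⟩
            · rw [treeMu, treeMu, arrow]
              simp only [mark]
              simp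
              cases dt with
              | nil => exact absurd rfl hdt
              | cons d ds =>
                have h1 := one_le_sizeOf_prod d
                simp
                try omega
            · rw [treeMu, treeMu]
              simp only [mark]
              simp
              cases bt <;> simp <;> omega
            · rw [concat, arrow, graft_node_false]
              simp only [List.map_cons, List.map_nil]
              rw [graft_node_true]
              simp only [mark, children, List.nil_append]
              rw [hR]
              exact eqv_refl _
        | cons c₁ rest' =>
          -- head marked, more children: reorder
          have hc₁0 : markCount c₁.2 = 0 := hrest0 c₁ (List.mem_cons_self (a := _) (l := _))
          refine Or.inr (Or.inl ⟨.node true [c₁], .node false (c₀ :: rest'), ⟨?_, ?_, ?_⟩,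
            ⟨?_, ?_, ?_⟩, ?_, ?_, ?_⟩)
          · exact reduced_singleton (reduced_children hR c₁
              (List.mem_cons_of_mem _ (List.mem_cons_self (a := _) (l := _))))
          · rw [PreTree.Pointed, markCount_node]; simp [hc₁0]
          · rw [eqv_trivial_iff]; simp
          · refine reduced_subset hR ?_
            intro x hx
            rcases List.mem_cons.mp hx with rfl | hx'
            · exact List.mem_cons_self (a := _) (l := _)
            · exact List.mem_cons_of_mem _ (List.mem_cons_of_mem _ hx')
          · rw [PreTree.Pointed, markCount_node]
            have : (rest'.map fun p => markCount p.2).sum = 0 :=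
              List.sum_eq_zero_iff.mpr (by
                intro x hx
                obtain ⟨q, hq, rfl⟩ := List.mem_map.mp hx
                exact hrest0 q (List.mem_cons_of_mem _ hq))
            simp [this, hc₀1]
          · rw [eqv_trivial_iff]; simp
          · have h1 := one_le_sizeOf_prod c₀
            have h2 := one_le_sizeOf_prod c₁
            rw [treeMu, treeMu]; simp only [mark]; simp; try omega
          · have h1 := one_le_sizeOf_prod c₁
            rw [treeMu, treeMu]; simp only [mark]; simp; try omega
          · rw [concat, graft_node_true]
            simp only [mark, children, List.singleton_append]
            have hred : Reduced (PreTree.node false (c₁ :: c₀ :: rest')) := by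
              refine reduced_subset hR ?_
              intro x hx
              simp only [List.mem_cons] at hx ⊢
              tauto
            rw [hred]
            apply eqv_same_mem
            intro x
            simp only [List.mem_cons]
            tauto

end Aux8
namespace FreeKAD
open PreTree

theorem free_algebra_comp_dom' {α : Type} :
    (∀ T S : PreTree α,
        (T.Reduced ∧ T.Pointed ∧ ¬ eqv T trivialTree) →
        (S.Reduced ∧ S.Pointed ∧ ¬ eqv S trivialTree) →
        ((concat T S).Reduced ∧ (concat T S).Pointed ∧
          ¬ eqv (concat T S) trivialTree)) ∧
    (∀ T : PreTree α,
        (T.Reduced ∧ T.Pointed ∧ ¬ eqv T trivialTree) →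
        ((domTree T).Reduced ∧ (domTree T).Pointed ∧
          ¬ eqv (domTree T) trivialTree)) ∧
    (∀ (X : Type) (A : Set (X → X → Prop)),
      (∀ R ∈ A, ∀ S ∈ A, relComp R S ∈ A) →
      (∀ R ∈ A, relDom R ∈ A) →
      ∀ g : α → X → X → Prop, (∀ a, g a ∈ A) →
      ∃! h : NRPTree α → (X → X → Prop),
        (∀ T, h T ∈ A) ∧
        (∀ (a : α) (U : NRPTree α), eqv U.1 (arrow a) → h U = g a) ∧
        (∀ T S U : NRPTree α, eqv U.1 (concat T.1 S.1) →
            h U = relComp (h T) (h S)) ∧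
        (∀ T U : NRPTree α, eqv U.1 (domTree T.1) → h U = relDom (h T))) := by
  refine ⟨fun T S hT hS => good_concat hT hS, fun T hT => good_dom hT, ?_⟩
  intro X A hcomp hdom g hg
  set hFun : NRPTree α → (X → X → Prop) := fun T x y => HomInto T.1 g x y with hFunDef
  -- rewriting lemmas
  have harrow : ∀ (a : α) (U : NRPTree α), eqv U.1 (arrow a) → hFun U = g a := by
    intro a U hU
    funext x y
    exact propext ((homInto_eqv hU g x y).trans (homInto_arrow g a x y))
  have hconc : ∀ T S U : NRPTree α, eqv U.1 (concat T.1 S.1) →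
      hFun U = relComp (hFun T) (hFun S) := by
    intro T S U hU
    funext x y
    exact propext ((homInto_eqv hU g x y).trans
      ((homInto_reduce (graft S.1 T.1) g x y).trans
        (homInto_graft S.1 T.1 T.2.2.1 x y)))
  have hdomt : ∀ T U : NRPTree α, eqv U.1 (domTree T.1) → hFun U = relDom (hFun T) := by
    intro T U hU
    funext x y
    exact propext ((homInto_eqv hU g x y).trans
      ((homInto_reduce (pointAtRoot T.1) g x y).trans
        (homInto_pointAtRoot T.1 T.2.2.1 x y)))
  have hmem : ∀ T : NRPTree α, hFun T ∈ A := by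
    have main : ∀ n, ∀ T : NRPTree α, treeMu T.1 < n → hFun T ∈ A := by
      intro n
      induction n with
      | zero => intro T hT; omega
      | succ n ihn =>
        intro T hT
        rcases decomp T.1 T.2.1 T.2.2.1 T.2.2.2 with ⟨a, ha⟩ |
          ⟨A', B', gA, gB, mA, mB, he⟩ | ⟨A', gA, mA, he⟩
        · rw [harrow a T ha]
          exact hg a
        · rw [hconc ⟨A', gA⟩ ⟨B', gB⟩ T he]
          exact hcomp _ (ihn ⟨A', gA⟩ (by show treeMu A' < n; omega)) _ (ihn ⟨B', gB⟩ (by show treeMu B' < n; omega))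
        · rw [hdomt ⟨A', gA⟩ T he]
          exact hdom _ (ihn ⟨A', gA⟩ (by show treeMu A' < n; omega))
    exact fun T => main (treeMu T.1 + 1) T (by omega)
  refine ⟨hFun, ⟨hmem, harrow, hconc, hdomt⟩, ?_⟩
  -- uniqueness
  intro h' hp'
  have uniq : ∀ (h₁ h₂ : NRPTree α → (X → X → Prop)),
      ((∀ T, h₁ T ∈ A) ∧
        (∀ (a : α) (U : NRPTree α), eqv U.1 (arrow a) → h₁ U = g a) ∧
        (∀ T S U : NRPTree α, eqv U.1 (concat T.1 S.1) → h₁ U = relComp (h₁ T) (h₁ S)) ∧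
        (∀ T U : NRPTree α, eqv U.1 (domTree T.1) → h₁ U = relDom (h₁ T))) →
      ((∀ T, h₂ T ∈ A) ∧
        (∀ (a : α) (U : NRPTree α), eqv U.1 (arrow a) → h₂ U = g a) ∧
        (∀ T S U : NRPTree α, eqv U.1 (concat T.1 S.1) → h₂ U = relComp (h₂ T) (h₂ S)) ∧
        (∀ T U : NRPTree α, eqv U.1 (domTree T.1) → h₂ U = relDom (h₂ T))) →
      h₁ = h₂ := by
    intro h₁ h₂ hp₁ hp₂
    have main : ∀ n, ∀ T : NRPTree α, treeMu T.1 < n → h₁ T = h₂ T := by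
      intro n
      induction n with
      | zero => intro T hT; omega
      | succ n ihn =>
        intro T hT
        rcases decomp T.1 T.2.1 T.2.2.1 T.2.2.2 with ⟨a, ha⟩ |
          ⟨A', B', gA, gB, mA, mB, he⟩ | ⟨A', gA, mA, he⟩
        · rw [hp₁.2.1 a T ha, hp₂.2.1 a T ha]
        · rw [hp₁.2.2.1 ⟨A', gA⟩ ⟨B', gB⟩ T he, hp₂.2.2.1 ⟨A', gA⟩ ⟨B', gB⟩ T he,
            ihn ⟨A', gA⟩ (by show treeMu A' < n; omega), ihn ⟨B', gB⟩ (by show treeMu B' < n; omega)]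
        · rw [hp₁.2.2.2 ⟨A', gA⟩ T he, hp₂.2.2.2 ⟨A', gA⟩ T he, ihn ⟨A', gA⟩ (by show treeMu A' < n; omega)]
    funext T
    exact main (treeMu T.1 + 1) T (by omega)
  exact uniq h' hFun hp' ⟨hmem, harrow, hconc, hdomt⟩

end FreeKAD

namespace FreeKAD
open PreTree

/-- The reduced pointed `Σ`-labelled rooted trees other
than the trivial tree are closed under pointed tree concatenation and
domain, and form the free algebra over `Σ` for the class of
`{∘, D}`-algebras of binary relations.  (Trees are compared with `eqv`,
equality of trees whose children collections are sets.) -/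
theorem free_algebra_comp_dom {α : Type} :
    (∀ T S : PreTree α,
        (T.Reduced ∧ T.Pointed ∧ ¬ eqv T trivialTree) →
        (S.Reduced ∧ S.Pointed ∧ ¬ eqv S trivialTree) →
        ((concat T S).Reduced ∧ (concat T S).Pointed ∧
          ¬ eqv (concat T S) trivialTree)) ∧
    (∀ T : PreTree α,
        (T.Reduced ∧ T.Pointed ∧ ¬ eqv T trivialTree) →
        ((domTree T).Reduced ∧ (domTree T).Pointed ∧
          ¬ eqv (domTree T) trivialTree)) ∧
    (∀ (X : Type) (A : Set (X → X → Prop)),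
      (∀ R ∈ A, ∀ S ∈ A, relComp R S ∈ A) →
      (∀ R ∈ A, relDom R ∈ A) →
      ∀ g : α → X → X → Prop, (∀ a, g a ∈ A) →
      ∃! h : NRPTree α → (X → X → Prop),
        (∀ T, h T ∈ A) ∧
        (∀ (a : α) (U : NRPTree α), eqv U.1 (arrow a) → h U = g a) ∧
        (∀ T S U : NRPTree α, eqv U.1 (concat T.1 S.1) →
            h U = relComp (h T) (h S)) ∧
        (∀ T U : NRPTree α, eqv U.1 (domTree T.1) → h U = relDom (h T))) :=
  free_algebra_comp_dom'

end FreeKAD
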